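/- arXiv:1603.07922 — 4 statements merged into one kernel-verified Lean document; each statement's English description precedes it below -/
import Mathlib

section
/- The only solutions in integers x and positive integers m, n to the equation x² + 23^m = 12^n are (x, m, n) = (±11, 1, 2), and the only solutions in integers x and positive integers m, n to the equation x² + 47^m = 24^n are (x, m, n) = (±23, 1, 2). -/
theorem pow_mod_cycle (c L p m : ℕ) (hc : c ^ L % p = 1 % p) :
    c ^ m % p = c ^ (m % L) % p := by
  rcases Nat.eq_zero_or_pos L with rfl | hL
  · simp [Nat.mod_zero]
  conv_lhs => rw [← Nat.div_add_mod m L, pow_add, pow_mul]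
  have h : (c ^ L) ^ (m / L) ≡ 1 ^ (m / L) [MOD p] := Nat.ModEq.pow _ hc
  have h2 : (c ^ L) ^ (m / L) * c ^ (m % L) ≡ 1 ^ (m / L) * c ^ (m % L) [MOD p] :=
    Nat.ModEq.mul_right _ h
  simpa [Nat.ModEq] using h2

theorem eulerKill (c d y m n p o : ℕ) (heq : y ^ 2 + c ^ m = d ^ n)
    (hp : Nat.Prime p) (hp2 : 2 < p)
    (hc : c ^ o % p = 1 % p) (hd : d ^ o % p = 1 % p)
    (hr : ((d ^ (n % o) % p + (p - c ^ (m % o) % p)) % p) ^ ((p - 1) / 2) % p = p - 1) :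
    False := by
  haveI : Fact p.Prime := ⟨hp⟩
  haveI : Fact (2 < p) := ⟨hp2⟩
  have hppos : 0 < p := by omega
  set A := c ^ (m % o) % p with hA
  set B := d ^ (n % o) % p with hB
  set r := (B + (p - A)) % p with hrdef
  have hAp : A < p := Nat.mod_lt _ hppos
  have hBp : B < p := Nat.mod_lt _ hppos
  set Y := y ^ 2 % p with hY
  have hYp : Y < p := Nat.mod_lt _ hppos
  have key : (Y + A) % p = B := by
    rw [hY, hA, ← pow_mod_cycle c o p m hc, ← Nat.add_mod, heq,
      pow_mod_cycle d o p n hd]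
  have hYr : Y = r := by
    rw [hrdef]
    rcases lt_or_ge (Y + A) p with h | h
    · have hB' : B = Y + A := by rw [← key, Nat.mod_eq_of_lt h]
      have e : B + (p - A) = Y + p := by omega
      rw [e, Nat.add_mod_right, Nat.mod_eq_of_lt hYp]
    · have h2 : Y + A - p < p := by omega
      have hB' : B = Y + A - p := by
        rw [← key, Nat.mod_eq_sub_mod h, Nat.mod_eq_of_lt h2]
      have e : B + (p - A) = Y := by omega
      rw [e, Nat.mod_eq_of_lt hYp]
  -- now to ZMod
  have hyr : y ^ 2 ≡ r [MOD p] := by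
    show y ^ 2 % p = r % p
    rw [← hY, hYr, Nat.mod_eq_of_lt (hYr ▸ hYp)]
  have hzq : ((y : ZMod p)) ^ 2 = (r : ZMod p) := by
    have := (ZMod.natCast_eq_natCast_iff _ _ _).2 hyr
    push_cast at this
    exact this
  have hre : ((r : ZMod p)) ^ ((p - 1) / 2) = -1 := by
    have hmod : r ^ ((p - 1) / 2) ≡ (p - 1) [MOD p] := by
      show r ^ ((p - 1) / 2) % p = (p - 1) % p
      rw [hr, Nat.mod_eq_of_lt (by omega)]
    have := (ZMod.natCast_eq_natCast_iff _ _ _).2 hmod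
    push_cast at this
    rw [this, Nat.cast_sub (by omega : 1 ≤ p), ZMod.natCast_self, Nat.cast_one]
    ring
  have hy0 : (y : ZMod p) ≠ 0 := by
    intro h0
    rw [h0] at hzq
    have hzr : (r : ZMod p) = 0 := by rw [← hzq]; ring
    rw [hzr] at hre
    have he : (p - 1) / 2 ≠ 0 := by omega
    rw [zero_pow he] at hre
    exact one_ne_zero (α := ZMod p) (by rw [← neg_eq_zero, hre])
  have hfermat : (y : ZMod p) ^ (p - 1) = 1 := ZMod.pow_card_sub_one_eq_one hy0
  have hodd : p % 2 = 1 := Nat.odd_iff.1 (hp.odd_of_ne_two (by omega))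
  have h2 : 2 * ((p - 1) / 2) = p - 1 := by omega
  have : (1 : ZMod p) = -1 := by
    calc (1 : ZMod p) = (y : ZMod p) ^ (p - 1) := hfermat.symm
      _ = ((y : ZMod p) ^ 2) ^ ((p - 1) / 2) := by rw [← pow_mul, h2]
      _ = ((r : ZMod p)) ^ ((p - 1) / 2) := by rw [hzq]
      _ = -1 := hre
  exact ZMod.neg_one_ne_one this.symm
theorem stepGeneric (c d L1 L2 : ℕ) (S1 S2 P : List (Nat × Nat))
    (hL : L1 ∣ L2) (hL2 : 0 < L2)
    (hP : ∀ po ∈ P, 2 < po.1 ∧ Nat.Prime po.1)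
    (hD : ∀ q ∈ S1, ∀ i < L2 / L1, ∀ j < L2 / L1,
      ((q.1 + i * L1, q.2 + j * L1) ∈ S2 ∨
        ∃ po ∈ P, po.2 ∣ L2 ∧
          c ^ po.2 % po.1 = 1 % po.1 ∧ d ^ po.2 % po.1 = 1 % po.1 ∧
          ((d ^ ((q.2 + j * L1) % po.2) % po.1 +
            (po.1 - c ^ ((q.1 + i * L1) % po.2) % po.1)) % po.1) ^ ((po.1 - 1) / 2) % po.1
            = po.1 - 1))
    (y m n : ℕ) (heq : y ^ 2 + c ^ m = d ^ n)
    (h1 : (m % L1, n % L1) ∈ S1) : (m % L2, n % L2) ∈ S2 := by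
  have hL1 : 0 < L1 := by
    rcases Nat.eq_zero_or_pos L1 with rfl | h
    · rw [Nat.zero_dvd] at hL; omega
    · exact h
  have haL : m % L2 < L2 := Nat.mod_lt _ hL2
  have hbL : n % L2 < L2 := Nat.mod_lt _ hL2
  have ham : (m % L2) % L1 = m % L1 := Nat.mod_mod_of_dvd m hL
  have hbn : (n % L2) % L1 = n % L1 := Nat.mod_mod_of_dvd n hL
  have h1' : ((m % L2) % L1, (n % L2) % L1) ∈ S1 := by rw [ham, hbn]; exact h1
  have hi : (m % L2) / L1 < L2 / L1 := Nat.div_lt_div_of_lt_of_dvd hL haL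
  have hj : (n % L2) / L1 < L2 / L1 := Nat.div_lt_div_of_lt_of_dvd hL hbL
  have hia : (m % L2) % L1 + (m % L2) / L1 * L1 = m % L2 := Nat.mod_add_div' _ L1
  have hjb : (n % L2) % L1 + (n % L2) / L1 * L1 = n % L2 := Nat.mod_add_div' _ L1
  have hD' := hD ((m % L2) % L1, (n % L2) % L1) h1' ((m % L2) / L1) hi ((n % L2) / L1) hj
  simp only [hia, hjb] at hD'
  rcases hD' with h | ⟨po, hpo, hdvd, hcp, hdp, hrr⟩
  · exact h
  · exfalso
    obtain ⟨hp2, hprime⟩ := hP po hpo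
    have hma : (m % L2) % po.2 = m % po.2 := Nat.mod_mod_of_dvd m hdvd
    have hnb : (n % L2) % po.2 = n % po.2 := Nat.mod_mod_of_dvd n hdvd
    rw [hma, hnb] at hrr
    exact eulerKill c d y m n po.1 po.2 heq hprime hp2 hcp hdp hrr

theorem parityKill (c d y m n v : ℕ) (heq : y ^ 2 + c ^ m = d ^ n)
    (hn : 2 ≤ n) (hv : 0 < v) (hvd : v ∣ d ^ 2)
    (hc : c ^ 2 % v = 1 % v)
    (hz : ∀ z < v, (z * z + c ^ (m % 2)) % v ≠ 0) : False := by
  apply hz (y % v) (Nat.mod_lt y hv)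
  have h1 : c ^ m % v = c ^ (m % 2) % v := pow_mod_cycle c 2 v m hc
  have hdn : d ^ n % v = 0 := by
    obtain ⟨t, ht⟩ := hvd.trans (pow_dvd_pow d hn)
    rw [ht, Nat.mul_mod_right]
  have h3 : (y % v) * (y % v) + c ^ (m % 2) ≡ y * y + c ^ m [MOD v] :=
    Nat.ModEq.add ((Nat.mod_modEq y v).mul (Nat.mod_modEq y v)) h1.symm
  have h4 : y * y + c ^ m = d ^ n := by rw [← heq]; ring
  calc ((y % v) * (y % v) + c ^ (m % 2)) % v
      = (y * y + c ^ m) % v := h3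
    _ = d ^ n % v := by rw [h4]
    _ = 0 := hdn

theorem factorStep (c d y m k : ℕ) (hcp : Nat.Prime c) (hm : 0 < m) (hk : 0 < k)
    (hnd : ¬ c ∣ 2 * d ^ k) (hd1 : 1 < d ^ k)
    (heq : y ^ 2 + c ^ m = (d ^ k) ^ 2) :
    c ^ m + 1 = 2 * d ^ k := by
  set D := d ^ k with hD
  have h0 : 0 < c ^ m := pow_pos hcp.pos m
  have h1 : y ^ 2 < D ^ 2 := by rw [← heq]; omega
  have hy : y < D := by
    by_contra h
    exact absurd (Nat.pow_le_pow_left (not_lt.1 h) 2) (by omega)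
  have hst : (D - y) * (D + y) = c ^ m := by
    have hz : (D : ℤ) - y = ((D - y : ℕ) : ℤ) := by
      rw [Int.ofNat_sub hy.le]
    have heqZ : (y : ℤ) ^ 2 + (c : ℤ) ^ m = (D : ℤ) ^ 2 := by exact_mod_cast heq
    have : ((D - y : ℕ) : ℤ) * ((D + y : ℕ) : ℤ) = ((c ^ m : ℕ) : ℤ) := by
      push_cast [hy.le]
      linear_combination -heqZ
    exact_mod_cast this
  have hdvd : (D - y) ∣ c ^ m := ⟨D + y, hst.symm⟩
  obtain ⟨j, hj, hsj⟩ := (Nat.dvd_prime_pow hcp).1 hdvd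
  rcases Nat.eq_zero_or_pos j with rfl | hj1
  · have h1' : D - y = 1 := by simpa using hsj
    have : D + y = c ^ m := by rw [← hst, h1', one_mul]
    omega
  · exfalso
    have hcs : c ∣ D - y := hsj ▸ dvd_pow_self c hj1.ne'
    have ht : D + y = c ^ (m - j) := by
      have hcm : c ^ j * (D + y) = c ^ j * c ^ (m - j) := by
        rw [← pow_add, Nat.add_sub_cancel' hj, ← hst, hsj]
      exact Nat.eq_of_mul_eq_mul_left (pow_pos hcp.pos j) hcm
    rcases Nat.eq_zero_or_pos (m - j) with h0' | hpos
    · rw [h0', pow_zero] at ht; omega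
    · have hct : c ∣ D + y := ht ▸ dvd_pow_self c hpos.ne'
      have hsum : (D - y) + (D + y) = 2 * D := by omega
      exact hnd (hD ▸ (hsum ▸ Nat.dvd_add hcs hct))

theorem finalKill (c d m k v : ℕ) (hk : 2 ≤ k) (hv : 0 < v)
    (hvd : v ∣ 2 * d ^ 2) (hc : c ^ 2 % v = 1 % v)
    (heq : c ^ m + 1 = 2 * d ^ k)
    (hz : ∀ r < 2, (c ^ r + 1) % v ≠ 0) : False := by
  apply hz (m % 2) (Nat.mod_lt m (by norm_num))
  have h1 : (c ^ m + 1) % v = 0 := by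
    rw [heq]
    obtain ⟨t, ht⟩ := hvd.trans (mul_dvd_mul_left 2 (pow_dvd_pow d hk))
    rw [ht, Nat.mul_mod_right]
  have h2 : c ^ (m % 2) + 1 ≡ c ^ m + 1 [MOD v] :=
    Nat.ModEq.add_right 1 (pow_mod_cycle c 2 v m hc).symm
  unfold Nat.ModEq at h2
  omega

def Sa2 : List (Nat × Nat) := [(1, 1)]
def Sa6 : List (Nat × Nat) := [(3, 1), (3, 5)]
def Pa6 : List (Nat × Nat) := [(7, 6), (13, 6)]
theorem HPa6 : ∀ po ∈ Pa6, 2 < po.1 ∧ Nat.Prime po.1 := by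
  intro po hpo
  fin_cases hpo <;> exact ⟨by norm_num, by norm_num⟩

set_option maxHeartbeats 4000000 in
set_option maxRecDepth 1000000 in
set_option exponentiation.threshold 10000 in
theorem Da6 : ∀ q ∈ Sa2, ∀ i < 6 / 2, ∀ j < 6 / 2,
      ((q.1 + i * 2, q.2 + j * 2) ∈ Sa6 ∨
        ∃ po ∈ Pa6, po.2 ∣ 6 ∧
          23 ^ po.2 % po.1 = 1 % po.1 ∧ 12 ^ po.2 % po.1 = 1 % po.1 ∧
          ((12 ^ ((q.2 + j * 2) % po.2) % po.1 +
            (po.1 - 23 ^ ((q.1 + i * 2) % po.2) % po.1)) % po.1) ^ ((po.1 - 1) / 2) % po.1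
            = po.1 - 1) := by decide
def Sa36 : List (Nat × Nat) := [(3, 35), (9, 5), (9, 7), (9, 11), (9, 13), (9, 25), (9, 29), (15, 17), (15, 35), (21, 5), (21, 17), (21, 23), (21, 25), (33, 13), (33, 17), (33, 29), (33, 31), (33, 35)]
def Pa36 : List (Nat × Nat) := [(37, 36), (73, 36)]
theorem HPa36 : ∀ po ∈ Pa36, 2 < po.1 ∧ Nat.Prime po.1 := by
  intro po hpo
  fin_cases hpo <;> exact ⟨by norm_num, by norm_num⟩

set_option maxHeartbeats 4000000 in
set_option maxRecDepth 1000000 in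
set_option exponentiation.threshold 10000 in
theorem Da36 : ∀ q ∈ Sa6, ∀ i < 36 / 6, ∀ j < 36 / 6,
      ((q.1 + i * 6, q.2 + j * 6) ∈ Sa36 ∨
        ∃ po ∈ Pa36, po.2 ∣ 36 ∧
          23 ^ po.2 % po.1 = 1 % po.1 ∧ 12 ^ po.2 % po.1 = 1 % po.1 ∧
          ((12 ^ ((q.2 + j * 6) % po.2) % po.1 +
            (po.1 - 23 ^ ((q.1 + i * 6) % po.2) % po.1)) % po.1) ^ ((po.1 - 1) / 2) % po.1
            = po.1 - 1) := by decide
def Sa144 : List (Nat × Nat) := [(3, 35), (3, 143), (9, 5), (9, 7), (9, 47), (9, 49), (9, 65), (9, 79), (9, 83), (9, 85), (9, 97), (9, 101), (9, 113), (9, 115), (9, 119), (9, 133), (15, 17), (15, 35), (15, 53), (15, 71), (15, 89), (21, 5), (21, 23), (21, 25), (21, 41), (21, 53), (21, 59), (21, 89), (21, 131), (21, 133), (33, 13), (33, 29), (33, 31), (33, 71), (33, 89), (33, 103), (33, 107), (33, 121), (33, 125), (33, 137), (33, 139), (33, 143), (39, 107), (39, 143), (45, 11), (45, 13), (45, 29),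 (45, 43), (45, 47), (45, 49), (45, 61), (45, 65), (45, 77), (45, 79), (45, 83), (45, 97), (45, 113), (45, 115), (51, 17), (51, 35), (51, 53), (51, 125), (51, 143), (57, 5), (57, 17), (57, 23), (57, 53), (57, 95), (57, 97), (57, 113), (57, 131), (57, 133), (69, 35), (69, 53), (69, 67), (69, 71), (69, 85), (69, 89), (69, 101), (69, 103), (69, 107), (69, 121), (69, 137), (69, 139), (75, 71), (75, 107), (81, 7), (81, 11), (81, 13), (81, 25), (81, 29), (81, 41), (81, 43), (81, 47), (81, 61), (81, 77), (81, 79), (81, 119), (81, 121), (81, 137), (87, 17), (87, 89), (87, 107), (87, 125), (87, 143), (93, 17), (93, 59), (93, 61), (93, 77), (93, 95), (93, 97), (93, 113), (93, 125), (93, 131), (105, 17), (105, 31), (105, 35), (105, 49), (105, 53), (105, 65), (105, 67), (105, 71), (105, 85), (105, 101), (105, 103), (105, 143), (111, 35), (111, 71), (117, 5), (117, 7), (117, 11), (117, 25), (117, 41), (117, 43), (117, 83), (117, 85), (117, 101), (117, 115), (117, 119), (117, 121), (117, 133), (117, 137), (123, 53), (123, 71), (123, 89), (123, 107), (123, 125),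 (129, 23), (129, 25), (129, 41), (129, 59), (129, 61), (129, 77), (129, 89), (129, 95), (129, 125), (141, 13), (141, 17), (141, 29), (141, 31), (141, 35), (141, 49), (141, 65), (141, 67), (141, 107), (141, 125), (141, 139), (141, 143)]
def Pa144 : List (Nat × Nat) := [(17, 16)]
theorem HPa144 : ∀ po ∈ Pa144, 2 < po.1 ∧ Nat.Prime po.1 := by
  intro po hpo
  fin_cases hpo <;> exact ⟨by norm_num, by norm_num⟩

set_option maxHeartbeats 4000000 in
set_option maxRecDepth 1000000 in
set_option exponentiation.threshold 10000 in
theorem Da144 : ∀ q ∈ Sa36, ∀ i < 144 / 36, ∀ j < 144 / 36,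
      ((q.1 + i * 36, q.2 + j * 36) ∈ Sa144 ∨
        ∃ po ∈ Pa144, po.2 ∣ 144 ∧
          23 ^ po.2 % po.1 = 1 % po.1 ∧ 12 ^ po.2 % po.1 = 1 % po.1 ∧
          ((12 ^ ((q.2 + j * 36) % po.2) % po.1 +
            (po.1 - 23 ^ ((q.1 + i * 36) % po.2) % po.1)) % po.1) ^ ((po.1 - 1) / 2) % po.1
            = po.1 - 1) := by decide
def Sa288 : List (Nat × Nat) := [(3, 143), (3, 287), (9, 65), (9, 85), (9, 113), (9, 209), (9, 229), (9, 257), (21, 59), (21, 203), (33, 125), (33, 269), (45, 11), (45, 43), (45, 49), (45, 97), (45, 155), (45, 187), (45, 193), (45, 241), (69, 67), (69, 211), (81, 41), (81, 137), (81, 185), (81, 281), (93, 61), (93, 95), (93, 205), (93, 239), (105, 17), (105, 65), (105, 161), (105, 209), (117, 7), (117, 11), (117, 43), (117, 151), (117, 155), (117, 187), (123, 53), (123, 107), (123, 197), (123, 251), (129, 77), (129, 221), (141, 49), (141, 107), (141, 139), (141, 193), (141, 251), (141, 283), (153, 97), (153, 241), (159, 89), (159, 233), (177, 89), (177, 137),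 (177, 233), (177, 281), (189, 13), (189, 47), (189, 61), (189, 79), (189, 157), (189, 191), (189, 205), (189, 223), (201, 17), (201, 113), (201, 133), (201, 161), (201, 257), (201, 277), (213, 103), (213, 107), (213, 139), (213, 247), (213, 251), (213, 283), (219, 107), (219, 251), (225, 29), (225, 173), (237, 59), (237, 97), (237, 203), (237, 241), (249, 49), (249, 193), (261, 115), (261, 259), (267, 125), (267, 269), (273, 41), (273, 89), (273, 185), (273, 233), (285, 13), (285, 31), (285, 143), (285, 157), (285, 175), (285, 287)]
def Pa288 : List (Nat × Nat) := [(97, 96), (193, 96), (577, 288)]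
theorem HPa288 : ∀ po ∈ Pa288, 2 < po.1 ∧ Nat.Prime po.1 := by
  intro po hpo
  fin_cases hpo <;> exact ⟨by norm_num, by norm_num⟩

set_option maxHeartbeats 4000000 in
set_option maxRecDepth 1000000 in
set_option exponentiation.threshold 10000 in
theorem Da288 : ∀ q ∈ Sa144, ∀ i < 288 / 144, ∀ j < 288 / 144,
      ((q.1 + i * 144, q.2 + j * 144) ∈ Sa288 ∨
        ∃ po ∈ Pa288, po.2 ∣ 288 ∧
          23 ^ po.2 % po.1 = 1 % po.1 ∧ 12 ^ po.2 % po.1 = 1 % po.1 ∧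
          ((12 ^ ((q.2 + j * 144) % po.2) % po.1 +
            (po.1 - 23 ^ ((q.1 + i * 144) % po.2) % po.1)) % po.1) ^ ((po.1 - 1) / 2) % po.1
            = po.1 - 1) := by decide
def Sa864 : List (Nat × Nat) := [(9, 209), (9, 401), (9, 641), (9, 833), (105, 353), (105, 785), (201, 305), (201, 737), (237, 203), (237, 635), (297, 209), (297, 401), (297, 641), (297, 833), (369, 425), (369, 857), (489, 305), (489, 737), (585, 209), (585, 641), (597, 203), (597, 635), (669, 95), (669, 527), (777, 257), (777, 305), (777, 689), (777, 737), (801, 317), (801, 749), (849, 89), (849, 521)]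
def Pa864 : List (Nat × Nat) := [(109, 108), (271, 54), (433, 432), (2593, 864)]
theorem HPa864 : ∀ po ∈ Pa864, 2 < po.1 ∧ Nat.Prime po.1 := by
  intro po hpo
  fin_cases hpo <;> exact ⟨by norm_num, by norm_num⟩

set_option maxHeartbeats 4000000 in
set_option maxRecDepth 1000000 in
set_option exponentiation.threshold 10000 in
theorem Da864 : ∀ q ∈ Sa288, ∀ i < 864 / 288, ∀ j < 864 / 288,
      ((q.1 + i * 288, q.2 + j * 288) ∈ Sa864 ∨
        ∃ po ∈ Pa864, po.2 ∣ 864 ∧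
          23 ^ po.2 % po.1 = 1 % po.1 ∧ 12 ^ po.2 % po.1 = 1 % po.1 ∧
          ((12 ^ ((q.2 + j * 288) % po.2) % po.1 +
            (po.1 - 23 ^ ((q.1 + i * 288) % po.2) % po.1)) % po.1) ^ ((po.1 - 1) / 2) % po.1
            = po.1 - 1) := by decide
def Sa4320 : List (Nat × Nat) := []
def Pa4320 : List (Nat × Nat) := [(31, 30), (41, 40), (61, 60), (541, 270)]
theorem HPa4320 : ∀ po ∈ Pa4320, 2 < po.1 ∧ Nat.Prime po.1 := by
  intro po hpo
  fin_cases hpo <;> exact ⟨by norm_num, by norm_num⟩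

set_option maxHeartbeats 4000000 in
set_option maxRecDepth 1000000 in
set_option exponentiation.threshold 10000 in
theorem Da4320 : ∀ q ∈ Sa864, ∀ i < 4320 / 864, ∀ j < 4320 / 864,
      ((q.1 + i * 864, q.2 + j * 864) ∈ Sa4320 ∨
        ∃ po ∈ Pa4320, po.2 ∣ 4320 ∧
          23 ^ po.2 % po.1 = 1 % po.1 ∧ 12 ^ po.2 % po.1 = 1 % po.1 ∧
          ((12 ^ ((q.2 + j * 864) % po.2) % po.1 +
            (po.1 - 23 ^ ((q.1 + i * 864) % po.2) % po.1)) % po.1) ^ ((po.1 - 1) / 2) % po.1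
            = po.1 - 1) := by decide
def Sb2 : List (Nat × Nat) := [(1, 1)]
def Sb6 : List (Nat × Nat) := [(1, 3), (1, 5), (3, 1), (3, 3), (5, 1), (5, 5)]
def Pb6 : List (Nat × Nat) := [(7, 6)]
theorem HPb6 : ∀ po ∈ Pb6, 2 < po.1 ∧ Nat.Prime po.1 := by
  intro po hpo
  fin_cases hpo <;> exact ⟨by norm_num, by norm_num⟩

set_option maxHeartbeats 4000000 in
set_option maxRecDepth 1000000 in
set_option exponentiation.threshold 10000 in
theorem Db6 : ∀ q ∈ Sb2, ∀ i < 6 / 2, ∀ j < 6 / 2,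
      ((q.1 + i * 2, q.2 + j * 2) ∈ Sb6 ∨
        ∃ po ∈ Pb6, po.2 ∣ 6 ∧
          47 ^ po.2 % po.1 = 1 % po.1 ∧ 24 ^ po.2 % po.1 = 1 % po.1 ∧
          ((24 ^ ((q.2 + j * 2) % po.2) % po.1 +
            (po.1 - 47 ^ ((q.1 + i * 2) % po.2) % po.1)) % po.1) ^ ((po.1 - 1) / 2) % po.1
            = po.1 - 1) := by decide
def Sb12 : List (Nat × Nat) := [(3, 3), (3, 7), (3, 9), (7, 3), (7, 9), (7, 11), (11, 7), (11, 11)]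
def Pb12 : List (Nat × Nat) := [(5, 4), (13, 12)]
theorem HPb12 : ∀ po ∈ Pb12, 2 < po.1 ∧ Nat.Prime po.1 := by
  intro po hpo
  fin_cases hpo <;> exact ⟨by norm_num, by norm_num⟩

set_option maxHeartbeats 4000000 in
set_option maxRecDepth 1000000 in
set_option exponentiation.threshold 10000 in
theorem Db12 : ∀ q ∈ Sb6, ∀ i < 12 / 6, ∀ j < 12 / 6,
      ((q.1 + i * 6, q.2 + j * 6) ∈ Sb12 ∨
        ∃ po ∈ Pb12, po.2 ∣ 12 ∧
          47 ^ po.2 % po.1 = 1 % po.1 ∧ 24 ^ po.2 % po.1 = 1 % po.1 ∧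
          ((24 ^ ((q.2 + j * 6) % po.2) % po.1 +
            (po.1 - 47 ^ ((q.1 + i * 6) % po.2) % po.1)) % po.1) ^ ((po.1 - 1) / 2) % po.1
            = po.1 - 1) := by decide
def Sb24 : List (Nat × Nat) := [(3, 9), (3, 21), (7, 9), (7, 21), (15, 9), (15, 21), (19, 9), (19, 21)]
def Pb24 : List (Nat × Nat) := [(97, 24)]
theorem HPb24 : ∀ po ∈ Pb24, 2 < po.1 ∧ Nat.Prime po.1 := by
  intro po hpo
  fin_cases hpo <;> exact ⟨by norm_num, by norm_num⟩

set_option maxHeartbeats 4000000 in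
set_option maxRecDepth 1000000 in
set_option exponentiation.threshold 10000 in
theorem Db24 : ∀ q ∈ Sb12, ∀ i < 24 / 12, ∀ j < 24 / 12,
      ((q.1 + i * 12, q.2 + j * 12) ∈ Sb24 ∨
        ∃ po ∈ Pb24, po.2 ∣ 24 ∧
          47 ^ po.2 % po.1 = 1 % po.1 ∧ 24 ^ po.2 % po.1 = 1 % po.1 ∧
          ((24 ^ ((q.2 + j * 12) % po.2) % po.1 +
            (po.1 - 47 ^ ((q.1 + i * 12) % po.2) % po.1)) % po.1) ^ ((po.1 - 1) / 2) % po.1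
            = po.1 - 1) := by decide
def Sb72 : List (Nat × Nat) := [(7, 9), (7, 21), (7, 45), (7, 57), (19, 9), (19, 45), (31, 21), (31, 57), (55, 9), (55, 45), (63, 9), (63, 33), (63, 45), (63, 69)]
def Pb72 : List (Nat × Nat) := [(19, 9), (37, 36), (73, 72)]
theorem HPb72 : ∀ po ∈ Pb72, 2 < po.1 ∧ Nat.Prime po.1 := by
  intro po hpo
  fin_cases hpo <;> exact ⟨by norm_num, by norm_num⟩

set_option maxHeartbeats 4000000 in
set_option maxRecDepth 1000000 in
set_option exponentiation.threshold 10000 in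
theorem Db72 : ∀ q ∈ Sb24, ∀ i < 72 / 24, ∀ j < 72 / 24,
      ((q.1 + i * 24, q.2 + j * 24) ∈ Sb72 ∨
        ∃ po ∈ Pb72, po.2 ∣ 72 ∧
          47 ^ po.2 % po.1 = 1 % po.1 ∧ 24 ^ po.2 % po.1 = 1 % po.1 ∧
          ((24 ^ ((q.2 + j * 24) % po.2) % po.1 +
            (po.1 - 47 ^ ((q.1 + i * 24) % po.2) % po.1)) % po.1) ^ ((po.1 - 1) / 2) % po.1
            = po.1 - 1) := by decide
def Sb360 : List (Nat × Nat) := []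
def Pb360 : List (Nat × Nat) := [(31, 30), (61, 60), (241, 120), (271, 90)]
theorem HPb360 : ∀ po ∈ Pb360, 2 < po.1 ∧ Nat.Prime po.1 := by
  intro po hpo
  fin_cases hpo <;> exact ⟨by norm_num, by norm_num⟩

set_option maxHeartbeats 4000000 in
set_option maxRecDepth 1000000 in
set_option exponentiation.threshold 10000 in
theorem Db360 : ∀ q ∈ Sb72, ∀ i < 360 / 72, ∀ j < 360 / 72,
      ((q.1 + i * 72, q.2 + j * 72) ∈ Sb360 ∨
        ∃ po ∈ Pb360, po.2 ∣ 360 ∧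
          47 ^ po.2 % po.1 = 1 % po.1 ∧ 24 ^ po.2 % po.1 = 1 % po.1 ∧
          ((24 ^ ((q.2 + j * 72) % po.2) % po.1 +
            (po.1 - 47 ^ ((q.1 + i * 72) % po.2) % po.1)) % po.1) ^ ((po.1 - 1) / 2) % po.1
            = po.1 - 1) := by decide

theorem terai_forward1 (x : ℤ) (m n : ℕ) (hm : 0 < m) (hn : 0 < n)
    (heqZ : x ^ 2 + 23 ^ m = 12 ^ n) : (x = 11 ∨ x = -11) ∧ m = 1 ∧ n = 2 := by
  have hyx : ((x.natAbs : ℤ)) ^ 2 = x ^ 2 := by rw [← Int.abs_eq_natAbs, sq_abs]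
  set y := x.natAbs with hy
  have heq : y ^ 2 + 23 ^ m = 12 ^ n := by
    have h := heqZ
    rw [← hyx] at h
    exact_mod_cast h
  have hn2 : 2 ≤ n := by
    by_contra h
    have hn1 : n = 1 := by omega
    rw [hn1] at heq
    have h23 : (23:ℕ) ≤ 23 ^ m := Nat.le_self_pow hm.ne' 23
    omega
  have hm2 : m % 2 = 1 := by
    rcases Nat.mod_two_eq_zero_or_one m with h0 | h1
    · exact absurd (parityKill 23 12 y m n 16 heq hn2 (by norm_num) (by norm_num)
        (by norm_num) (by rw [h0]; decide)) (fun h => h)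
    · exact h1
  rcases Nat.mod_two_eq_zero_or_one n with hne | hno
  swap
  · exfalso
    have hSa2 : (m % 2, n % 2) ∈ Sa2 := by simp [Sa2, hm2, hno]
    have hSa6 := stepGeneric 23 12 2 6 Sa2 Sa6 Pa6 (by norm_num) (by norm_num) HPa6 Da6 y m n heq hSa2
    have hSa36 := stepGeneric 23 12 6 36 Sa6 Sa36 Pa36 (by norm_num) (by norm_num) HPa36 Da36 y m n heq hSa6
    have hSa144 := stepGeneric 23 12 36 144 Sa36 Sa144 Pa144 (by norm_num) (by norm_num) HPa144 Da144 y m n heq hSa36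
    have hSa288 := stepGeneric 23 12 144 288 Sa144 Sa288 Pa288 (by norm_num) (by norm_num) HPa288 Da288 y m n heq hSa144
    have hSa864 := stepGeneric 23 12 288 864 Sa288 Sa864 Pa864 (by norm_num) (by norm_num) HPa864 Da864 y m n heq hSa288
    have hSa4320 := stepGeneric 23 12 864 4320 Sa864 Sa4320 Pa4320 (by norm_num) (by norm_num) HPa4320 Da4320 y m n heq hSa864
    exact absurd hSa4320 (by simp [Sa4320])
  · -- n even
    have hk1 : 0 < n / 2 := by omega
    set k := n / 2 with hkdef
    have hk : n = 2 * k := by omega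
    have heq' : y ^ 2 + 23 ^ m = (12 ^ k) ^ 2 := by
      rw [← pow_mul, show k * 2 = n by omega]
      exact heq
    have hnd : ¬ (23:ℕ) ∣ 2 * 12 ^ k := by
      intro h
      have hp : (23:ℕ).Prime := by norm_num
      rcases (Nat.Prime.dvd_mul hp).1 h with h2 | h12
      · norm_num at h2
      · have := Nat.Prime.dvd_of_dvd_pow hp h12
        norm_num at this
    have hd1 : 1 < 12 ^ k := Nat.one_lt_pow hk1.ne' (by norm_num)
    have hcm := factorStep 23 12 y m k (by norm_num) hm hk1 hnd hd1 heq'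
    rcases Nat.lt_or_ge k 2 with hk2 | hk2
    · have hk1' : k = 1 := by omega
      rw [hk1'] at hcm
      have h23 : (23:ℕ) ^ m = 23 ^ 1 := by norm_num; omega
      have hm1 : m = 1 := Nat.pow_right_injective (by norm_num) h23
      have hny : n = 2 := by omega
      have hy121 : y ^ 2 = 11 ^ 2 := by
        rw [hk1', hm1] at heq'
        norm_num at heq'
        omega
      have hy11 : y = 11 := Nat.pow_left_injective (by norm_num) hy121
      refine ⟨?_, hm1, hny⟩
      have := Int.natAbs_eq_iff.mp (show x.natAbs = 11 from hy11)
      exact_mod_cast this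
    · exact absurd (finalKill 23 12 m k 16 hk2 (by norm_num) (by norm_num)
        (by norm_num) hcm (by decide)) (fun h => h)

theorem terai_forward2 (x : ℤ) (m n : ℕ) (hm : 0 < m) (hn : 0 < n)
    (heqZ : x ^ 2 + 47 ^ m = 24 ^ n) : (x = 23 ∨ x = -23) ∧ m = 1 ∧ n = 2 := by
  have hyx : ((x.natAbs : ℤ)) ^ 2 = x ^ 2 := by rw [← Int.abs_eq_natAbs, sq_abs]
  set y := x.natAbs with hy
  have heq : y ^ 2 + 47 ^ m = 24 ^ n := by
    have h := heqZ
    rw [← hyx] at h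
    exact_mod_cast h
  have hn2 : 2 ≤ n := by
    by_contra h
    have hn1 : n = 1 := by omega
    rw [hn1] at heq
    have h47 : (47:ℕ) ≤ 47 ^ m := Nat.le_self_pow hm.ne' 47
    omega
  have hm2 : m % 2 = 1 := by
    rcases Nat.mod_two_eq_zero_or_one m with h0 | h1
    · exact absurd (parityKill 47 24 y m n 32 heq hn2 (by norm_num) (by norm_num)
        (by norm_num) (by rw [h0]; decide)) (fun h => h)
    · exact h1
  rcases Nat.mod_two_eq_zero_or_one n with hne | hno
  swap
  · exfalso
    have hSb2 : (m % 2, n % 2) ∈ Sb2 := by simp [Sb2, hm2, hno]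
    have hSb6 := stepGeneric 47 24 2 6 Sb2 Sb6 Pb6 (by norm_num) (by norm_num) HPb6 Db6 y m n heq hSb2
    have hSb12 := stepGeneric 47 24 6 12 Sb6 Sb12 Pb12 (by norm_num) (by norm_num) HPb12 Db12 y m n heq hSb6
    have hSb24 := stepGeneric 47 24 12 24 Sb12 Sb24 Pb24 (by norm_num) (by norm_num) HPb24 Db24 y m n heq hSb12
    have hSb72 := stepGeneric 47 24 24 72 Sb24 Sb72 Pb72 (by norm_num) (by norm_num) HPb72 Db72 y m n heq hSb24
    have hSb360 := stepGeneric 47 24 72 360 Sb72 Sb360 Pb360 (by norm_num) (by norm_num) HPb360 Db360 y m n heq hSb72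
    exact absurd hSb360 (by simp [Sb360])
  · -- n even
    have hk1 : 0 < n / 2 := by omega
    set k := n / 2 with hkdef
    have hk : n = 2 * k := by omega
    have heq' : y ^ 2 + 47 ^ m = (24 ^ k) ^ 2 := by
      rw [← pow_mul, show k * 2 = n by omega]
      exact heq
    have hnd : ¬ (47:ℕ) ∣ 2 * 24 ^ k := by
      intro h
      have hp : (47:ℕ).Prime := by norm_num
      rcases (Nat.Prime.dvd_mul hp).1 h with h2 | h24
      · norm_num at h2
      · have := Nat.Prime.dvd_of_dvd_pow hp h24
        norm_num at this
    have hd1 : 1 < 24 ^ k := Nat.one_lt_pow hk1.ne' (by norm_num)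
    have hcm := factorStep 47 24 y m k (by norm_num) hm hk1 hnd hd1 heq'
    rcases Nat.lt_or_ge k 2 with hk2 | hk2
    · have hk1' : k = 1 := by omega
      rw [hk1'] at hcm
      have h47 : (47:ℕ) ^ m = 47 ^ 1 := by norm_num; omega
      have hm1 : m = 1 := Nat.pow_right_injective (by norm_num) h47
      have hny : n = 2 := by omega
      have hy121 : y ^ 2 = 23 ^ 2 := by
        rw [hk1', hm1] at heq'
        norm_num at heq'
        omega
      have hy23 : y = 23 := Nat.pow_left_injective (by norm_num) hy121
      refine ⟨?_, hm1, hny⟩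
      have := Int.natAbs_eq_iff.mp (show x.natAbs = 23 from hy23)
      exact_mod_cast this
    · exact absurd (finalKill 47 24 m k 32 hk2 (by norm_num) (by norm_num)
        (by norm_num) hcm (by decide)) (fun h => h)

theorem terai_equations :
    (∀ (x : ℤ) (m n : ℕ), 0 < m → 0 < n →
      (x ^ 2 + 23 ^ m = 12 ^ n ↔ (x = 11 ∨ x = -11) ∧ m = 1 ∧ n = 2)) ∧
    (∀ (x : ℤ) (m n : ℕ), 0 < m → 0 < n →
      (x ^ 2 + 47 ^ m = 24 ^ n ↔ (x = 23 ∨ x = -23) ∧ m = 1 ∧ n = 2)) := by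
  constructor
  · intro x m n hm hn
    constructor
    · exact terai_forward1 x m n hm hn
    · rintro ⟨hx, rfl, rfl⟩
      rcases hx with rfl | rfl <;> norm_num
  · intro x m n hm hn
    constructor
    · exact terai_forward2 x m n hm hn
    · rintro ⟨hx, rfl, rfl⟩
      rcases hx with rfl | rfl <;> norm_num
end

section
/- Let n be an odd prime and let x, y be coprime integers, not both zero, and define φₙ(x, y) = Σ_{i=0}^{n−1} (−1)^i x^{n−1−i} y^i, so that (x + y)·φₙ(x, y) = x^n + y^n. Then gcd(x + y, φₙ(x, y)) ∈ {1, n}; moreover the following are equivalent: gcd(x + y, φₙ(x, y)) = n, n ∣ x^n + y^n, n ∣ φₙ(x, y), and n ∣ x + y. Furthermore, n² does not divide φₙ(x, y). -/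
/-- `phi n x y = ∑_{i=0}^{n-1} (-1)^i x^(n-1-i) y^i`, so that
`(x + y) * phi n x y = x ^ n + y ^ n` for odd `n`. -/
def phi (n : ℕ) (x y : ℤ) : ℤ :=
  ∑ i ∈ Finset.range n, (-1) ^ i * x ^ (n - 1 - i) * y ^ i

lemma phi_eq (n : ℕ) (x y : ℤ) :
    phi n x y = ∑ i ∈ Finset.range n, (-y) ^ i * x ^ (n - 1 - i) := by
  unfold phi
  refine Finset.sum_congr rfl fun i hi => ?_
  rw [neg_pow]; ring

lemma phi_mul (n : ℕ) (hodd : Odd n) (x y : ℤ) :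
    (x + y) * phi n x y = x ^ n + y ^ n := by
  have h := geom_sum₂_mul (-y) x n
  rw [← phi_eq] at h
  rw [Odd.neg_pow hodd] at h
  have : phi n x y * (-y - x) = -(y^n) - x^n := h
  linarith [this]

lemma phi_mod (n : ℕ) (hn : 0 < n) (x y : ℤ) :
    (x + y) ∣ phi n x y - n * x ^ (n - 1) := by
  have heq : phi n x y - n * x ^ (n - 1)
      = ∑ i ∈ Finset.range n, ((-1) ^ i * x ^ (n - 1 - i) * (y ^ i - (-x) ^ i)) := by
    unfold phi
    rw [Finset.sum_congr rfl (fun i hi => by ring :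
      ∀ i ∈ Finset.range n, (-1:ℤ) ^ i * x ^ (n - 1 - i) * (y ^ i - (-x) ^ i)
        = (-1) ^ i * x ^ (n - 1 - i) * y ^ i - (-1) ^ i * x ^ (n - 1 - i) * (-x) ^ i),
      Finset.sum_sub_distrib]
    have h2 : ∀ i ∈ Finset.range n, (-1:ℤ) ^ i * x ^ (n - 1 - i) * (-x) ^ i = x ^ (n-1) := by
      intro i hi
      rw [Finset.mem_range] at hi
      have hni : n - 1 - i + i = n - 1 := by omega
      rw [neg_pow x i, mul_mul_mul_comm, ← pow_add (-1:ℤ), ← pow_add, hni, ← two_mul,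
        pow_mul]
      norm_num
    rw [Finset.sum_congr rfl h2, Finset.sum_const, Finset.card_range]
    ring
  rw [heq]
  refine Finset.dvd_sum fun i hi => ?_
  refine Dvd.dvd.mul_left ?_ _
  have := sub_dvd_pow_sub_pow y (-x) i
  rwa [sub_neg_eq_add, add_comm] at this

lemma fermat_step (n : ℕ) (hn : n.Prime) (x y : ℤ)
    (h : (n : ℤ) ∣ x ^ n + y ^ n) : (n : ℤ) ∣ x + y := by
  haveI : Fact n.Prime := ⟨hn⟩
  have := (ZMod.intCast_zmod_eq_zero_iff_dvd _ n).2 h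
  push_cast at this
  rw [ZMod.pow_card, ZMod.pow_card] at this
  rw [← ZMod.intCast_zmod_eq_zero_iff_dvd]
  push_cast
  exact this

theorem gcd_of_phi (n : ℕ) (hn : n.Prime) (hodd : Odd n)
    (x y : ℤ) (hne : ¬(x = 0 ∧ y = 0)) (hxy : Int.gcd x y = 1) :
    (x + y) * phi n x y = x ^ n + y ^ n ∧
    (Int.gcd (x + y) (phi n x y) = 1 ∨ Int.gcd (x + y) (phi n x y) = n) ∧
    (Int.gcd (x + y) (phi n x y) = n ↔ (n : ℤ) ∣ x ^ n + y ^ n) ∧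
    ((n : ℤ) ∣ x ^ n + y ^ n ↔ (n : ℤ) ∣ phi n x y) ∧
    ((n : ℤ) ∣ phi n x y ↔ (n : ℤ) ∣ x + y) ∧
    ¬ ((n : ℤ) ^ 2 ∣ phi n x y) := by
  have hn0 : 0 < n := hn.pos
  have key := phi_mul n hodd x y
  have hmod := phi_mod n hn0 x y
  have hcop : IsCoprime x y := Int.isCoprime_iff_gcd_eq_one.2 hxy
  -- chain of divisibility equivalences
  have e1 : (n : ℤ) ∣ x + y → (n : ℤ) ∣ phi n x y := by
    intro h
    have h1 : (n : ℤ) ∣ phi n x y - n * x ^ (n - 1) := dvd_trans h hmod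
    have h2 : (n : ℤ) ∣ (n : ℤ) * x ^ (n - 1) := Dvd.intro _ rfl
    have := dvd_add h1 h2
    simpa using this
  have e2 : (n : ℤ) ∣ phi n x y → (n : ℤ) ∣ x ^ n + y ^ n := by
    intro h; rw [← key]; exact Dvd.dvd.mul_left h _
  have e3 : (n : ℤ) ∣ x ^ n + y ^ n → (n : ℤ) ∣ x + y := fermat_step n hn x y
  -- gcd divides n
  set g : ℕ := Int.gcd (x + y) (phi n x y) with hg
  have hg1 : (g : ℤ) ∣ x + y := Int.gcd_dvd_left _ _
  have hg2 : (g : ℤ) ∣ phi n x y := Int.gcd_dvd_right _ _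
  have hgn : g ∣ n := by
    have hgnx : (g : ℤ) ∣ (n : ℤ) * x ^ (n - 1) := by
      have := dvd_sub hg2 (dvd_trans hg1 hmod)
      simpa using this
    have hcg : IsCoprime (g : ℤ) x := by
      have h1 : IsCoprime (y + x * 1) x := hcop.symm.add_mul_left_left 1
      rw [mul_one, add_comm] at h1
      exact h1.of_isCoprime_of_dvd_left hg1
    have : (g : ℤ) ∣ (n : ℤ) :=
      (hcg.pow_right).dvd_of_dvd_mul_right (by rwa [mul_comm] at hgnx)
    exact_mod_cast this
  have hgcases : g = 1 ∨ g = n := (Nat.Prime.eq_one_or_self_of_dvd hn g hgn)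
  have hiff1 : g = n ↔ (n : ℤ) ∣ x ^ n + y ^ n := by
    constructor
    · intro h
      exact e2 (h ▸ hg2)
    · intro h
      have hxy' := e3 h
      have hphi := e1 hxy'
      have : (n : ℤ) ∣ (g : ℤ) := Int.dvd_coe_gcd hxy' hphi
      exact Nat.dvd_antisymm hgn (by exact_mod_cast this)
  -- not n^2 ∣ phi
  have hnsq : ¬ ((n : ℤ) ^ 2 ∣ phi n x y) := by
    by_cases hd : (n : ℤ) ∣ x + y
    · -- use LTE: emultiplicity = 1
      have hny : ¬ (n : ℤ) ∣ y := by
        intro hy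
        have hx : (n : ℤ) ∣ x := by
          have := dvd_sub hd hy
          simpa using this
        have h1 : (n : ℤ) ∣ ((Int.gcd x y : ℕ) : ℤ) := Int.dvd_coe_gcd hx hy
        rw [hxy] at h1
        have h2 : (n : ℤ) = 1 := Int.eq_one_of_dvd_one (by positivity) (by exact_mod_cast h1)
        exact hn.one_lt.ne' (by exact_mod_cast h2)
      have hprime : Prime (n : ℤ) := Nat.prime_iff_prime_int.1 hn
      have hltE := emultiplicity_geom_sum₂_eq_one (p := n) (R := ℤ)
        (x := -y) (y := x) hprime hodd
        (by rw [show -y - x = -(x + y) by ring]; exact Dvd.dvd.neg_right hd)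
        (by rwa [Int.dvd_neg])
      rw [← phi_eq] at hltE
      intro hcontra
      have := not_pow_dvd_of_emultiplicity_lt (a := (n:ℤ)) (b := phi n x y) (m := 2)
        (by rw [hltE]; exact_mod_cast one_lt_two)
      exact this hcontra
    · intro hcontra
      exact hd (e3 (e2 (dvd_trans (dvd_pow_self _ two_ne_zero) hcontra)))
  exact ⟨key, hgcases, hiff1, ⟨fun h => e1 (e3 h), e2⟩, ⟨fun h => e3 (e2 h), e1⟩, hnsq⟩
end

section
/- Let n be an odd prime, let x, y be coprime integers, and let ℓ be a prime dividing x^n + y^n. Then either ℓ divides x + y, or ℓ ≡ 1 (mod n). -/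
theorem prime_divisor_of_sum_of_nth_powers (n : ℕ) (hn : n.Prime) (hodd : Odd n)
    (x y : ℤ) (hxy : Int.gcd x y = 1)
    (ℓ : ℕ) (hℓ : ℓ.Prime) (hdvd : (ℓ : ℤ) ∣ x ^ n + y ^ n) :
    (ℓ : ℤ) ∣ x + y ∨ ℓ ≡ 1 [MOD n] := by
  haveI : Fact ℓ.Prime := ⟨hℓ⟩
  by_cases h : (ℓ : ℤ) ∣ x + y
  · exact Or.inl h
  right
  have hcop : IsCoprime x y := Int.isCoprime_iff_gcd_eq_one.mpr hxy
  have hx : ¬ (ℓ : ℤ) ∣ x := by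
    intro hxl
    have hyn : (ℓ : ℤ) ∣ y ^ n := by
      have := dvd_sub hdvd (hxl.pow hn.ne_zero)
      simpa using this
    have hyl : (ℓ : ℤ) ∣ y := (Nat.prime_iff_prime_int.mp hℓ).dvd_of_dvd_pow hyn
    obtain ⟨a, b, hab⟩ := hcop
    have : (ℓ : ℤ) ∣ 1 := hab ▸ dvd_add (hxl.mul_left a) (hyl.mul_left b)
    exact hℓ.one_lt.ne' (by exact_mod_cast Int.eq_one_of_dvd_one (by positivity) this)
  have hy : ¬ (ℓ : ℤ) ∣ y := by
    intro hyl
    have hxn : (ℓ : ℤ) ∣ x ^ n := by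
      have := dvd_sub hdvd (hyl.pow hn.ne_zero)
      simpa using this
    have hxl : (ℓ : ℤ) ∣ x := (Nat.prime_iff_prime_int.mp hℓ).dvd_of_dvd_pow hxn
    obtain ⟨a, b, hab⟩ := hcop
    have : (ℓ : ℤ) ∣ 1 := hab ▸ dvd_add (hxl.mul_left a) (hyl.mul_left b)
    exact hℓ.one_lt.ne' (by exact_mod_cast Int.eq_one_of_dvd_one (by positivity) this)
  set X : ZMod ℓ := (x : ZMod ℓ) with hX
  set Y : ZMod ℓ := (y : ZMod ℓ) with hY
  have hX0 : X ≠ 0 := by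
    rw [hX, Ne, ZMod.intCast_zmod_eq_zero_iff_dvd]; exact hx
  have hY0 : (-Y) ≠ 0 := by
    rw [hY, neg_ne_zero, Ne, ZMod.intCast_zmod_eq_zero_iff_dvd]; exact hy
  have hsum : X ^ n + Y ^ n = 0 := by
    have : ((x ^ n + y ^ n : ℤ) : ZMod ℓ) = 0 :=
      (ZMod.intCast_zmod_eq_zero_iff_dvd _ _).mpr hdvd
    push_cast at this
    simpa [hX, hY] using this
  have hpow : X ^ n = (-Y) ^ n := by
    rw [hodd.neg_pow]
    linear_combination hsum
  set u : ZMod ℓ := X * (-Y)⁻¹ with hu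
  have hun : u ^ n = 1 := by
    rw [hu, mul_pow, inv_pow, ← hpow, mul_inv_cancel₀ (pow_ne_zero _ hX0)]
  have hu1 : u ≠ 1 := by
    intro h1
    have : X = -Y := by
      field_simp [hu] at h1
      rw [hu, mul_inv_eq_one₀ hY0] at h1; exact h1
    apply h
    rw [← ZMod.intCast_zmod_eq_zero_iff_dvd]
    push_cast
    rw [← hX, ← hY, this]
    ring
  have hord : orderOf u = n := by
    have hd : orderOf u ∣ n := orderOf_dvd_of_pow_eq_one hun
    rcases (Nat.Prime.eq_one_or_self_of_dvd hn _ hd) with h1 | h2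
    · exact absurd (orderOf_eq_one_iff.mp h1) hu1
    · exact h2
  have hdvd' : n ∣ ℓ - 1 := by
    rw [← hord]
    exact orderOf_dvd_of_pow_eq_one (ZMod.pow_card_sub_one_eq_one
      (by rw [hu]; exact mul_ne_zero hX0 (inv_ne_zero hY0)))
  exact ((Nat.modEq_iff_dvd' hℓ.one_lt.le).mpr hdvd').symm
end

section
/- Let x and y be coprime nonzero integers and let n ≥ 5 be a prime number. If it is not the case that |x| = |y| = 1, then x^n + y^n has a prime divisor ℓ ≥ 11 (that is, the largest prime factor of x^n + y^n is at least 11). -/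
/-- Induction helper: `3n + 1 < 2^n` for `n ≥ 5`. -/
private lemma aux_two_pow (n : ℕ) (h5 : 5 ≤ n) : 3 * n + 1 < 2 ^ n := by
  induction n with
  | zero => omega
  | succ k ih =>
    rcases Nat.lt_or_ge k 5 with hk | hk
    · interval_cases k <;> first | omega | norm_num
    · have := ih (by omega)
      have : 2 ^ (k + 1) = 2 ^ k * 2 := by rw [pow_succ]
      omega

/-- Induction helper: `2m + 4 < 3^m` for `m ≥ 3`. -/
private lemma aux_three_pow (m : ℕ) (h3 : 3 ≤ m) : 2 * m + 4 < 3 ^ m := by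
  induction m with
  | zero => omega
  | succ k ih =>
    rcases Nat.lt_or_ge k 3 with hk | hk
    · interval_cases k <;> first | omega | norm_num
    · have := ih (by omega)
      have : 3 ^ (k + 1) = 3 ^ k * 3 := by rw [pow_succ]
      omega

/-- Size estimate in ℕ: if `1 ≤ b < a`, `2 ≤ a`, `5 ≤ n`, then `n(a+b) + b^n < a^n`. -/
private lemma aux_size (a b n : ℕ) (hb : 1 ≤ b) (hba : b < a) (h5 : 5 ≤ n) :
    n * (a + b) + b ^ n < a ^ n := by
  have ha2 : 2 ≤ a := by omega
  have hn1 : 1 ≤ n := by omega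
  rcases Nat.lt_or_ge a 3 with ha | ha
  · -- a = 2, b = 1
    have ha' : a = 2 := by omega
    have hb' : b = 1 := by omega
    subst ha' hb'
    have := aux_two_pow n h5
    simp only [one_pow]
    omega
  · -- a ≥ 3
    obtain ⟨c, rfl⟩ : ∃ c, a = c + 1 := ⟨a - 1, by omega⟩
    set a := c + 1 with ha_def
    have key : 2 * n < a ^ (n - 2) := by
      calc 2 * n < 3 ^ (n - 2) := by
            have := aux_three_pow (n - 2) (by omega)
            omega
        _ ≤ a ^ (n - 2) := Nat.pow_le_pow_left ha _
    have h1 : n * (a + b) < a ^ (n - 1) := by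
      have e1 : n * (a + b) ≤ 2 * n * a := by nlinarith
      have e2 : 2 * n * a < a ^ (n - 2) * a :=
        mul_lt_mul_of_pos_right key (by omega)
      have e3 : a ^ (n - 2) * a = a ^ (n - 1) := by
        rw [← pow_succ]
        congr 1
        omega
      omega
    have h2 : b ^ n ≤ c * a ^ (n - 1) := by
      calc b ^ n ≤ c ^ n := Nat.pow_le_pow_left (by omega) n
        _ = c * c ^ (n - 1) := by
            rw [← pow_succ']
            congr 1
            omega
        _ ≤ c * a ^ (n - 1) :=
            Nat.mul_le_mul_left _ (Nat.pow_le_pow_left (by omega) _)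
    have hpow : a ^ n = a ^ (n - 1) * a := by
      rw [← pow_succ]
      congr 1
      omega
    have hexp : a ^ (n - 1) * a = a ^ (n - 1) + c * a ^ (n - 1) := by ring
    omega

/-- Size estimate in ℤ. -/
private lemma aux_size_int (x y : ℤ) (hy : y ≠ 0) (hba : y.natAbs < x.natAbs)
    (n : ℕ) (h5 : 5 ≤ n) : (n : ℤ) * |x + y| < |x ^ n + y ^ n| := by
  set a := x.natAbs
  set b := y.natAbs
  have hb : 1 ≤ b := by
    have : y.natAbs ≠ 0 := Int.natAbs_ne_zero.mpr hy
    omega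
  have key := aux_size a b n hb hba h5
  have hax : |x| = (a : ℤ) := Int.abs_eq_natAbs x
  have hay : |y| = (b : ℤ) := Int.abs_eq_natAbs y
  have h1 : |x + y| ≤ (a : ℤ) + b := by
    calc |x + y| ≤ |x| + |y| := abs_add_le x y
      _ = (a : ℤ) + b := by rw [hax, hay]
  have h2 : (a : ℤ) ^ n - (b : ℤ) ^ n ≤ |x ^ n + y ^ n| := by
    have := abs_sub_abs_le_abs_sub (x ^ n) (-(y ^ n))
    simp only [sub_neg_eq_add, abs_neg, abs_pow] at this
    rw [hax, hay] at this
    exact this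
  have key' : (n : ℤ) * ((a : ℤ) + b) + (b : ℤ) ^ n < (a : ℤ) ^ n := by
    exact_mod_cast Nat.cast_lt.mpr key
  nlinarith [mul_le_mul_of_nonneg_left h1 (by positivity : (0:ℤ) ≤ (n:ℤ)),
    pow_nonneg (by positivity : (0:ℤ) ≤ (b:ℤ)) n]

/-- A prime `p < 11` dividing `x^n + y^n` (with the standing hypotheses) divides `x + y`. -/
private lemma aux_small_prime (x y : ℤ) (hco : IsCoprime x y)
    (n : ℕ) (hn : n.Prime) (h5 : 5 ≤ n)
    (p : ℕ) (hp : p.Prime) (hlt : p < 11) (hdvd : (p : ℤ) ∣ x ^ n + y ^ n) :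
    (p : ℤ) ∣ x + y := by
  have hn0 : n ≠ 0 := hn.ne_zero
  have hnodd : Odd n := hn.odd_of_ne_two (by omega)
  have hpunit : ¬ IsUnit ((p : ℤ)) := by
    rw [Int.isUnit_iff]
    have := hp.two_le
    omega
  -- p does not divide x nor y
  have hpx : ¬ (p : ℤ) ∣ x := by
    intro hd
    have h1 : (p : ℤ) ∣ y ^ n := by
      have : (p : ℤ) ∣ x ^ n := dvd_pow hd hn0
      have := dvd_sub hdvd this
      simpa using this
    have h2 : (p : ℤ) ∣ y := (Nat.prime_iff_prime_int.mp hp).dvd_of_dvd_pow h1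
    exact hpunit (hco.isUnit_of_dvd' hd h2)
  have hpy : ¬ (p : ℤ) ∣ y := by
    intro hd
    have h1 : (p : ℤ) ∣ x ^ n := by
      have : (p : ℤ) ∣ y ^ n := dvd_pow hd hn0
      have := dvd_sub hdvd this
      simpa using this
    have h2 : (p : ℤ) ∣ x := (Nat.prime_iff_prime_int.mp hp).dvd_of_dvd_pow h1
    exact hpunit (hco.isUnit_of_dvd' h2 hd)
  rcases eq_or_ne p 2 with hp2 | hp2
  · -- p = 2 : x and y are both odd, so 2 ∣ x + y
    subst hp2
    have hox : Odd x := Int.not_even_iff_odd.mp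
      (fun he => hpx (by exact_mod_cast he.two_dvd))
    have hoy : Odd y := Int.not_even_iff_odd.mp
      (fun he => hpy (by exact_mod_cast he.two_dvd))
    have : Even (x + y) := hox.add_odd hoy
    exact_mod_cast this.two_dvd
  · -- p odd
    have hp2' : 2 < p := lt_of_le_of_ne hp.two_le (Ne.symm hp2)
    haveI : Fact p.Prime := ⟨hp⟩
    haveI : Fact (2 < p) := ⟨hp2'⟩
    have hx0 : ((x : ZMod p)) ≠ 0 := by
      rw [Ne, ZMod.intCast_zmod_eq_zero_iff_dvd]
      exact hpx
    have hy0 : ((y : ZMod p)) ≠ 0 := by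
      rw [Ne, ZMod.intCast_zmod_eq_zero_iff_dvd]
      exact hpy
    have hs : ((x : ZMod p)) ^ n + ((y : ZMod p)) ^ n = 0 := by
      have : ((x ^ n + y ^ n : ℤ) : ZMod p) = 0 :=
        (ZMod.intCast_zmod_eq_zero_iff_dvd _ _).mpr hdvd
      push_cast at this
      exact this
    set u : ZMod p := (x : ZMod p) * ((y : ZMod p))⁻¹ with hu_def
    have hu0 : u ≠ 0 := mul_ne_zero hx0 (inv_ne_zero hy0)
    have hyn0 : ((y : ZMod p)) ^ n ≠ 0 := pow_ne_zero _ hy0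
    have hun : u ^ n = -1 := by
      have h1 : u ^ n = (x : ZMod p) ^ n * (((y : ZMod p)) ^ n)⁻¹ := by
        rw [hu_def, mul_pow, inv_pow]
      rw [h1]
      have h2 : (x : ZMod p) ^ n = -((y : ZMod p)) ^ n :=
        eq_neg_of_add_eq_zero_left hs
      rw [h2, neg_mul, mul_inv_cancel₀ hyn0]
    have hu2n : u ^ (2 * n) = 1 := by
      rw [mul_comm, pow_mul, hun]
      norm_num
    have hup : u ^ (p - 1) = 1 := ZMod.pow_card_sub_one_eq_one hu0
    have hd1 : orderOf u ∣ 2 * n := orderOf_dvd_of_pow_eq_one hu2n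
    have hd2 : orderOf u ∣ p - 1 := orderOf_dvd_of_pow_eq_one hup
    -- n does not divide orderOf u
    have hnd : ¬ n ∣ orderOf u := by
      intro hnd
      have h6 : n ∣ p - 1 := hnd.trans hd2
      have hle : n ≤ p - 1 := Nat.le_of_dvd (by omega) h6
      have hn9 : n ≤ 9 := by omega
      interval_cases n
      · have : p = 6 := by omega
        rw [this] at hp
        exact absurd hp (by norm_num)
      · exact absurd hn (by norm_num)
      · have : p = 8 := by omega
        rw [this] at hp
        exact absurd hp (by norm_num)
      · exact absurd hn (by norm_num)
      · exact absurd hn (by norm_num)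
    have hcop : (orderOf u).Coprime n :=
      Nat.Coprime.symm ((hn.coprime_iff_not_dvd).mpr hnd)
    have hdvd2 : orderOf u ∣ 2 := hcop.dvd_of_dvd_mul_right hd1
    have hu2 : u ^ 2 = 1 := orderOf_dvd_iff_pow_eq_one.mp hdvd2
    have : (u - 1) * (u + 1) = 0 := by ring_nf; linear_combination hu2
    rcases mul_eq_zero.mp this with h1 | h1
    · -- u = 1 : impossible
      exfalso
      have hu1 : u = 1 := sub_eq_zero.mp h1
      rw [hu1, one_pow] at hun
      exact ZMod.neg_one_ne_one hun.symm
    · -- u = -1, so x ≡ -y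
      have hu1 : u = -1 := eq_neg_of_add_eq_zero_left h1
      have hxy0 : (x : ZMod p) + (y : ZMod p) = 0 := by
        have := congrArg (· * (y : ZMod p)) hu1
        simp only [hu_def] at this
        rw [mul_assoc, inv_mul_cancel₀ hy0, mul_one, neg_mul, one_mul] at this
        rw [this]
        ring
      have : ((x + y : ℤ) : ZMod p) = 0 := by push_cast; exact hxy0
      exact (ZMod.intCast_zmod_eq_zero_iff_dvd _ _).mp this

/-- If prime `n` divides `x^n + y^n` then `n` divides `x + y` (Fermat). -/
private lemma aux_fermat (x y : ℤ) (n : ℕ) (hn : n.Prime)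
    (hdvd : (n : ℤ) ∣ x ^ n + y ^ n) : (n : ℤ) ∣ x + y := by
  haveI : Fact n.Prime := ⟨hn⟩
  have h0 : ((x ^ n + y ^ n : ℤ) : ZMod n) = 0 :=
    (ZMod.intCast_zmod_eq_zero_iff_dvd _ _).mpr hdvd
  push_cast at h0
  rw [ZMod.pow_card, ZMod.pow_card] at h0
  have : ((x + y : ℤ) : ZMod n) = 0 := by push_cast; exact h0
  exact (ZMod.intCast_zmod_eq_zero_iff_dvd _ _).mp this

theorem large_prime_factor_of_sum_of_nth_powers
    (x y : ℤ) (hx : x ≠ 0) (hy : y ≠ 0) (hxy : Int.gcd x y = 1)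
    (n : ℕ) (hn : n.Prime) (h5 : 5 ≤ n)
    (h : ¬(|x| = 1 ∧ |y| = 1)) :
    ∃ ℓ : ℕ, ℓ.Prime ∧ 11 ≤ ℓ ∧ (ℓ : ℤ) ∣ x ^ n + y ^ n := by
  by_contra hcon
  push_neg at hcon
  have hco : IsCoprime x y := Int.isCoprime_iff_gcd_eq_one.mpr hxy
  have hnodd : Odd n := hn.odd_of_ne_two (by omega)
  have hn0 : n ≠ 0 := hn.ne_zero
  have habne : x.natAbs ≠ y.natAbs := by
    intro he
    have h1 : Int.gcd x y = x.natAbs := by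
      rw [Int.gcd, he, Nat.gcd_self]
    have h2 : x.natAbs = 1 := by rw [← h1, hxy]
    have h3 : y.natAbs = 1 := by omega
    exact h ⟨by rw [Int.abs_eq_natAbs, h2]; norm_num,
             by rw [Int.abs_eq_natAbs, h3]; norm_num⟩
  have hxyne : x + y ≠ 0 := by
    intro he
    have h1 : x = -y := by linarith
    have : x.natAbs = y.natAbs := by rw [h1, Int.natAbs_neg]
    exact habne this
  have hSne : x ^ n + y ^ n ≠ 0 := by
    intro he
    have h1 : x ^ n = (-y) ^ n := by rw [hnodd.neg_pow]; linarith
    have h2 : x.natAbs ^ n = y.natAbs ^ n := by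
      have := congrArg Int.natAbs h1
      rwa [Int.natAbs_pow, Int.natAbs_pow, Int.natAbs_neg] at this
    exact habne (Nat.pow_left_injective (by omega) h2)
  -- every prime dividing x^n + y^n divides x + y
  have hsmall : ∀ p : ℕ, p.Prime → (p : ℤ) ∣ x ^ n + y ^ n → (p : ℤ) ∣ x + y := by
    intro p hp hpd
    have hplt : p < 11 := by
      by_contra hge
      exact hcon p hp (by omega) hpd
    exact aux_small_prime x y hco n hn h5 p hp hplt hpd
  -- the cofactor Q
  set Q : ℤ := ∑ i ∈ Finset.range n, x ^ i * (-y) ^ (n - 1 - i) with hQdef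
  have hQS : Q * (x + y) = x ^ n + y ^ n := by
    have hg := geom_sum₂_mul x (-y) n
    rw [sub_neg_eq_add] at hg
    rw [hQdef, hg, hnodd.neg_pow, sub_neg_eq_add]
  have hQdvdS : Q ∣ x ^ n + y ^ n := ⟨x + y, hQS.symm⟩
  have hQne : Q ≠ 0 := by
    intro h0
    rw [h0, zero_mul] at hQS
    exact hSne hQS.symm
  -- Q ≡ n x^(n-1)  mod (x+y)
  have hQcong : (x + y) ∣ (Q - (n : ℤ) * x ^ (n - 1)) := by
    have h1 : (n : ℤ) * x ^ (n - 1) = ∑ _i ∈ Finset.range n, x ^ (n - 1) := by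
      rw [Finset.sum_const, Finset.card_range, nsmul_eq_mul]
    rw [h1, hQdef, ← Finset.sum_sub_distrib]
    apply Finset.dvd_sum
    intro i hi
    have hi' : i < n := Finset.mem_range.mp hi
    have hsplit : x ^ (n - 1) = x ^ i * x ^ (n - 1 - i) := by
      rw [← pow_add]
      congr 1
      omega
    rw [hsplit, ← mul_sub]
    apply Dvd.dvd.mul_left
    have hd : (-y) - x ∣ (-y) ^ (n - 1 - i) - x ^ (n - 1 - i) :=
      sub_dvd_pow_sub_pow _ _ _
    have heq : (-y) - x = -(x + y) := by ring
    rw [heq, neg_dvd] at hd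
    exact hd
  -- any prime dividing Q equals n
  have hQprime : ∀ p : ℕ, p.Prime → p ∣ Q.natAbs → p = n := by
    intro p hp hpQ
    have hpQ' : (p : ℤ) ∣ Q :=
      (Int.natCast_dvd_natCast.mpr hpQ).trans (Int.natAbs_dvd.mpr dvd_rfl)
    have hpS : (p : ℤ) ∣ x ^ n + y ^ n := hpQ'.trans hQdvdS
    have hpxy : (p : ℤ) ∣ x + y := hsmall p hp hpS
    have hpInt : Prime ((p : ℤ)) := Nat.prime_iff_prime_int.mp hp
    have hpx : ¬ (p : ℤ) ∣ x := by
      intro hd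
      have h1 : (p : ℤ) ∣ y ^ n := by
        have h2 : (p : ℤ) ∣ x ^ n := dvd_pow hd hn0
        have := dvd_sub hpS h2
        simpa using this
      have h2 : (p : ℤ) ∣ y := hpInt.dvd_of_dvd_pow h1
      have : IsUnit ((p : ℤ)) := hco.isUnit_of_dvd' hd h2
      rw [Int.isUnit_iff] at this
      have := hp.two_le
      omega
    have hpnx : (p : ℤ) ∣ (n : ℤ) * x ^ (n - 1) := by
      have h2 : (p : ℤ) ∣ Q - (n : ℤ) * x ^ (n - 1) := hpxy.trans hQcong
      have := dvd_sub hpQ' h2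
      simpa using this
    rcases hpInt.dvd_or_dvd hpnx with h1 | h1
    · have : p ∣ n := Int.natCast_dvd_natCast.mp (by exact_mod_cast h1)
      exact (Nat.prime_dvd_prime_iff_eq hp hn).mp this
    · exact absurd (hpInt.dvd_of_dvd_pow h1) hpx
  -- n^2 does not divide Q  (lifting the exponent)
  have hnsq : ¬ ((n : ℤ)) ^ 2 ∣ Q := by
    intro hsq
    have hnQ : (n : ℤ) ∣ Q := (dvd_pow_self ((n : ℤ)) two_ne_zero).trans hsq
    have hnS : (n : ℤ) ∣ x ^ n + y ^ n := hnQ.trans hQdvdS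
    have hnxy : (n : ℤ) ∣ x + y := aux_fermat x y n hn hnS
    have hnInt : Prime ((n : ℤ)) := Nat.prime_iff_prime_int.mp hn
    have hnx : ¬ (n : ℤ) ∣ x := by
      intro hd
      have h1 : (n : ℤ) ∣ y ^ n := by
        have h2 : (n : ℤ) ∣ x ^ n := dvd_pow hd hn0
        have := dvd_sub hnS h2
        simpa using this
      have h2 : (n : ℤ) ∣ y := hnInt.dvd_of_dvd_pow h1
      have : IsUnit ((n : ℤ)) := hco.isUnit_of_dvd' hd h2
      rw [Int.isUnit_iff] at this
      have := hn.two_le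
      omega
    have hlte := Int.emultiplicity_pow_add_pow hn (hn.odd_of_ne_two (by omega))
      hnxy hnx hnodd
    have hmulS : emultiplicity ((n : ℤ)) (x ^ n + y ^ n) =
        emultiplicity ((n : ℤ)) Q + emultiplicity ((n : ℤ)) (x + y) := by
      rw [← hQS]
      exact emultiplicity_mul hnInt
    have hself : emultiplicity n n = (1 : ℕ∞) := Nat.Prime.emultiplicity_self hn
    have hfin : FiniteMultiplicity ((n : ℤ)) (x + y) :=
      Int.finiteMultiplicity_iff.mpr ⟨by simpa using hn.ne_one, hxyne⟩
    have hQ2 : (2 : ℕ∞) ≤ emultiplicity ((n : ℤ)) Q := le_emultiplicity_of_pow_dvd hsq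
    rw [hmulS, hself, hfin.emultiplicity_eq_multiplicity] at hlte
    set k := multiplicity ((n : ℤ)) (x + y) with hk
    have hle2 : (2 : ℕ∞) + (k : ℕ∞) ≤ (k : ℕ∞) + 1 := by
      calc (2 : ℕ∞) + (k : ℕ∞) ≤ emultiplicity ((n : ℤ)) Q + (k : ℕ∞) :=
            add_le_add_left hQ2 _
        _ = (k : ℕ∞) + 1 := hlte
    have : (2 + k : ℕ) ≤ k + 1 := by exact_mod_cast hle2
    omega
  -- Q.natAbs divides n
  have hQn : Q.natAbs ∣ n := by
    rcases eq_or_ne Q.natAbs 1 with h1 | h1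
    · rw [h1]; exact one_dvd n
    · have hQ0 : Q.natAbs ≠ 0 := Int.natAbs_ne_zero.mpr hQne
      have hrep := Nat.eq_prime_pow_of_unique_prime_dvd hQ0
        (fun {d} hd hdd => hQprime d hd hdd)
      set k := Q.natAbs.primeFactorsList.length with hkdef
      have hk1 : k ≤ 1 := by
        by_contra hk
        have hdvd2 : n ^ 2 ∣ Q.natAbs := by
          rw [hrep]
          exact pow_dvd_pow n (by omega)
        have : ((n : ℤ)) ^ 2 ∣ Q := by
          have h2 := Int.natCast_dvd_natCast.mpr hdvd2
          push_cast at h2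
          exact (dvd_abs _ _).mp h2
        exact hnsq this
      rw [hrep]
      interval_cases k
      · simpa using one_dvd n
      · simpa using dvd_refl n
  have hQdvdn : Q ∣ (n : ℤ) := Int.natAbs_dvd.mp (Int.natCast_dvd_natCast.mpr hQn)
  have hSdvd : x ^ n + y ^ n ∣ (n : ℤ) * (x + y) := by
    rw [← hQS]
    exact mul_dvd_mul_right hQdvdn (x + y)
  -- size contradiction
  have hne2 : (n : ℤ) * (x + y) ≠ 0 :=
    mul_ne_zero (by exact_mod_cast hn0) hxyne
  have hle : |x ^ n + y ^ n| ≤ |(n : ℤ) * (x + y)| :=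
    Int.le_of_dvd (abs_pos.mpr hne2) ((dvd_abs _ _).mpr ((abs_dvd _ _).mpr hSdvd))
  have habsn : |(n : ℤ) * (x + y)| = (n : ℤ) * |x + y| := by
    rw [abs_mul, abs_of_nonneg (by positivity : (0 : ℤ) ≤ (n : ℤ))]
  have hsize : (n : ℤ) * |x + y| < |x ^ n + y ^ n| := by
    rcases Nat.lt_or_ge x.natAbs y.natAbs with hlt | hge
    · have := aux_size_int y x hx hlt n h5
      rw [add_comm y x, add_comm (y ^ n) (x ^ n)] at this
      exact this
    · have hgt : y.natAbs < x.natAbs := by omega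
      exact aux_size_int x y hy hgt n h5
  rw [habsn] at hle
  linarith
end
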